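/- arXiv:math/0603732 — 2 statements merged into one kernel-verified Lean document; each statement's English description precedes it below -/
import Mathlib

section
/- Let A be a Hopf algebra over a field k with bijective antipode S, let π : A → k be an algebra homomorphism and J = ker π. Equip the vector space A ⊗_k A with: (i) the left adjoint A-action a·(x ⊗ y) = Σ a₁x ⊗ yS(a₂); (ii) the commuting A-bimodule structure b∗(x ⊗ y)∗b' = xb' ⊗ by (left action by multiplication on the second factor, right action by multiplication on the first factor). Then the quotient of A ⊗ A by the subspace J·(A ⊗ A) (image of the adjoint action of J), with its induced A-bimodule structure from (ii), is isomorphic as an A-bimodule to ¹A^{Ξℓ[π]∘S²}, i.e. to A with left action by multiplication and right action a·x·b = x·(Ξℓ[π](S²(b))). -/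
/-!
STATEMENT 5: Let `A` be a Hopf algebra over `k` with bijective antipode `S`, let
`π : A → k` be an algebra homomorphism with kernel `J`.  Equip `A ⊗ A` with the left
adjoint `A`-action `a·(x ⊗ y) = Σ a₁x ⊗ y S(a₂)` and with the commuting
`A`-bimodule structure `b ∗ (x ⊗ y) ∗ b' = x b' ⊗ b y`.  Then the quotient of
`A ⊗ A` by `J·(A ⊗ A)` (the span of the image of the adjoint action of `J`), with
the induced bimodule structure, is isomorphic as an `A`-bimodule to
`¹A^{Ξℓ[π]∘S²}`.
-/

open TensorProduct

noncomputable section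

variable (k A : Type) [Field k] [Ring A] [HopfAlgebra k A]

/-- The left winding endomorphism `Ξℓ[π] : a ↦ Σ π(a₁) a₂` of a Hopf algebra. -/
def windL (π : A →ₗ[k] k) : A →ₗ[k] A :=
  (TensorProduct.lid k A).toLinearMap ∘ₗ (TensorProduct.map π LinearMap.id) ∘ₗ Coalgebra.comul

/-- The left adjoint action of `A` on `A ⊗ A`:  `a · (x ⊗ y) = Σ a₁x ⊗ y S(a₂)`. -/
def adAct : A →ₗ[k] ((A ⊗[k] A) →ₗ[k] (A ⊗[k] A)) :=
  (TensorProduct.homTensorHomMap (RingHom.id k) A A A A) ∘ₗ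
    (TensorProduct.map (LinearMap.mul k A)
      ((LinearMap.mul k A).flip ∘ₗ HopfAlgebra.antipode (R := k))) ∘ₗ Coalgebra.comul

/-- The bimodule action `b ∗ (x ⊗ y) ∗ b' = x b' ⊗ b y` on `A ⊗ A`. -/
def bimodAct (b b' : A) : (A ⊗[k] A) →ₗ[k] (A ⊗[k] A) :=
  TensorProduct.map (LinearMap.mulRight k b') (LinearMap.mulLeft k b)

/-- The subspace `J · (A ⊗ A)`, the span of the image of the adjoint action of
`J = ker π`. -/
def Jsub (π : A →ₐ[k] k) : Submodule k (A ⊗[k] A) :=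
  Submodule.span k {z : A ⊗[k] A | ∃ a : A, π a = 0 ∧ ∃ w : A ⊗[k] A, adAct k A a w = z}

section Conv

variable {C B : Type} [AddCommGroup C] [Module k C] [Coalgebra k C]
  [Ring B] [Algebra k B]

/-- Convolution product on `C →ₗ[k] B`. -/
def conv (f g : C →ₗ[k] B) : C →ₗ[k] B :=
  LinearMap.mul' k B ∘ₗ TensorProduct.map f g ∘ₗ Coalgebra.comul

/-- Convolution unit. -/
def convUnit : C →ₗ[k] B := Algebra.linearMap k B ∘ₗ Coalgebra.counit

variable {k}

lemma conv_repr {ι : Type*} (f g : C →ₗ[k] B) {c : C} (r : Coalgebra.Repr k c ι) :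
    conv k f g c = ∑ i ∈ r.index, f (r.left i) * g (r.right i) := by
  simp only [conv, LinearMap.comp_apply, ← r.eq, map_sum, TensorProduct.map_tmul,
    LinearMap.mul'_apply]

lemma convUnit_apply (c : C) : convUnit k (B := B) c = Coalgebra.counit (R := k) c • 1 := by
  simp [convUnit, Algebra.smul_def, mul_one]

lemma sum_counit_smul {ι : Type*} {c : C} (r : Coalgebra.Repr k c ι) :
    ∑ i ∈ r.index, Coalgebra.counit (R := k) (r.left i) • r.right i = c := by
  have h := Coalgebra.sum_counit_tmul_eq r
  apply_fun (TensorProduct.lid k C) at h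
  simp only [map_sum, TensorProduct.lid_tmul, one_smul] at h
  exact h

lemma sum_smul_counit {ι : Type*} {c : C} (r : Coalgebra.Repr k c ι) :
    ∑ i ∈ r.index, Coalgebra.counit (R := k) (r.right i) • r.left i = c := by
  have h := Coalgebra.sum_tmul_counit_eq r
  apply_fun (TensorProduct.rid k C) at h
  simp only [map_sum, TensorProduct.rid_tmul, one_smul] at h
  exact h

lemma convUnit_conv (f : C →ₗ[k] B) : conv k (convUnit k) f = f := by
  ext c
  rw [conv_repr _ _ (Coalgebra.Repr.arbitrary k c)]
  simp only [convUnit, LinearMap.comp_apply, Algebra.linearMap_apply, ← Algebra.smul_def,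
    ← map_smul]
  rw [← map_sum, sum_counit_smul]

lemma conv_convUnit (f : C →ₗ[k] B) : conv k f (convUnit k) = f := by
  ext c
  rw [conv_repr _ _ (Coalgebra.Repr.arbitrary k c)]
  simp only [convUnit, LinearMap.comp_apply, Algebra.linearMap_apply]
  have : ∀ i ∈ (Coalgebra.Repr.arbitrary k c).index,
      f ((Coalgebra.Repr.arbitrary k c).left i) *
        algebraMap k B (Coalgebra.counit ((Coalgebra.Repr.arbitrary k c).right i)) =
      Coalgebra.counit (R := k) ((Coalgebra.Repr.arbitrary k c).right i) •
        f ((Coalgebra.Repr.arbitrary k c).left i) := fun i _ => by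
    rw [← Algebra.commutes, ← Algebra.smul_def]
  rw [Finset.sum_congr rfl this]
  simp only [← map_smul]
  rw [← map_sum, sum_smul_counit]

lemma conv_assoc (f g h : C →ₗ[k] B) : conv k (conv k f g) h = conv k f (conv k g h) := by
  ext c
  set r := Coalgebra.Repr.arbitrary k c
  set r₁ : (i : r.ι) → Coalgebra.Repr k (r.left i) (C × C) := fun i => Coalgebra.Repr.arbitrary k _
  set r₂ : (i : r.ι) → Coalgebra.Repr k (r.right i) (C × C) := fun i => Coalgebra.Repr.arbitrary k _
  have key := Coalgebra.sum_map_tmul_tmul_eq f g h c (repr := r) (a₁ := r₁) (a₂ := r₂)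
  apply_fun (LinearMap.mul' k B ∘ₗ (LinearMap.mul' k B).lTensor B) at key
  simp only [map_sum, LinearMap.comp_apply, LinearMap.lTensor_tmul, LinearMap.mul'_apply] at key
  rw [conv_repr _ _ r, conv_repr _ _ r]
  rw [Finset.sum_congr rfl (fun i _ => by rw [conv_repr f g (r₁ i), Finset.sum_mul] :
    ∀ i ∈ r.index, (conv k f g) (r.left i) * h (r.right i) =
      ∑ j ∈ (r₁ i).index, f ((r₁ i).left j) * g ((r₁ i).right j) * h (r.right i))]
  rw [Finset.sum_congr rfl (fun i _ => by rw [conv_repr g h (r₂ i), Finset.mul_sum] :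
    ∀ i ∈ r.index, f (r.left i) * (conv k g h) (r.right i) =
      ∑ j ∈ (r₂ i).index, f (r.left i) * (g ((r₂ i).left j) * h ((r₂ i).right j)))]
  simp only [mul_assoc] at key ⊢
  exact key.symm

lemma conv_eq_of (f g h : C →ₗ[k] B) (h1 : conv k f g = convUnit k)
    (h2 : conv k g h = convUnit k) : f = h := by
  have : conv k f (conv k g h) = conv k (conv k f g) h := (conv_assoc f g h).symm
  rw [h1, h2, conv_convUnit, convUnit_conv] at this
  exact this

end Conv
section Hopf

local notation "S" => HopfAlgebra.antipode (R := k) (A := A)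
local notation "ε" => Coalgebra.counit (R := k)
local notation "Δ" => Coalgebra.comul (R := k)

variable {k A}

/-- Representation of `comul 1`. -/
def Repr.one : Coalgebra.Repr k (1 : A) ℕ where
  index := ({0} : Finset ℕ)
  left := fun _ => 1
  right := fun _ => 1
  eq := by
    simp only [Finset.sum_singleton]
    rw [← Algebra.TensorProduct.one_def, ← map_one (Bialgebra.comulAlgHom k A)]
    rfl

lemma counit_one : ε (1 : A) = 1 := map_one (Bialgebra.counitAlgHom k A)

/-- Representation of `comul (x * y)`. -/
def Repr.mul {ι₁ ι₂ : Type*} {x y : A} (rx : Coalgebra.Repr k x ι₁) (ry : Coalgebra.Repr k y ι₂) :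
    Coalgebra.Repr k (x * y) (ι₁ × ι₂) where
  index := rx.index ×ˢ ry.index
  left := fun p => rx.left p.1 * ry.left p.2
  right := fun p => rx.right p.1 * ry.right p.2
  eq := by
    rw [Finset.sum_product]
    rw [Bialgebra.comul_mul, ← rx.eq, ← ry.eq, Finset.sum_mul_sum]
    simp only [Algebra.TensorProduct.tmul_mul_tmul]

/-- Representation of `comul (x ⊗ₜ y)` in the coalgebra `A ⊗ A`. -/
def Repr.tmul {ι₁ ι₂ : Type*} {x y : A} (rx : Coalgebra.Repr k x ι₁) (ry : Coalgebra.Repr k y ι₂) :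
    Coalgebra.Repr k (x ⊗ₜ[k] y) (ι₁ × ι₂) where
  index := rx.index ×ˢ ry.index
  left := fun p => rx.left p.1 ⊗ₜ[k] ry.left p.2
  right := fun p => rx.right p.1 ⊗ₜ[k] ry.right p.2
  eq := by
    rw [Finset.sum_product]
    rw [TensorProduct.comul_tmul]
    rw [← rx.eq, ← ry.eq]
    rw [TensorProduct.sum_tmul]
    rw [map_sum]
    refine Finset.sum_congr rfl fun i _ => ?_
    rw [TensorProduct.tmul_sum, map_sum]
    refine Finset.sum_congr rfl fun j _ => ?_
    simp [TensorProduct.tensorTensorTensorComm_tmul]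

lemma antipode_one : S (1 : A) = 1 := by
  have h := HopfAlgebra.sum_antipode_mul_eq_algebraMap_counit (R := k) (Repr.one (A := A))
  simpa [Repr.one, counit_one] using h

lemma counit_tmul (x y : A) :
    Coalgebra.counit (R := k) (x ⊗ₜ[k] y) = ε x * ε y := by
  rw [TensorProduct.counit_tmul, smul_eq_mul, mul_comm]

/-- `μ : A ⊗ A → A`. -/
local notation "μ" => LinearMap.mul' k A

lemma conv_mul'_antipode_mul' :
    conv k μ (S ∘ₗ μ) = convUnit k := by
  apply TensorProduct.ext'
  intro x y
  rw [conv_repr _ _ (Repr.tmul (Coalgebra.Repr.arbitrary k x) (Coalgebra.Repr.arbitrary k y))]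
  have h := HopfAlgebra.sum_mul_antipode_eq_algebraMap_counit (R := k)
    (Repr.mul (Coalgebra.Repr.arbitrary k x) (Coalgebra.Repr.arbitrary k y))
  simp only [Repr.mul, Finset.sum_product] at h
  simp only [Repr.tmul, Finset.sum_product, LinearMap.comp_apply, LinearMap.mul'_apply,
    TensorProduct.map_tmul]
  rw [h, convUnit_apply, _root_.counit_tmul, Bialgebra.counit_mul, Algebra.smul_def, mul_one]

lemma conv_antimul_mul' :
    conv k ((μ) ∘ₗ TensorProduct.map S S ∘ₗ (TensorProduct.comm k A A).toLinearMap) μ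
      = convUnit k := by
  apply TensorProduct.ext'
  intro x y
  set rx := Coalgebra.Repr.arbitrary k x
  set ry := Coalgebra.Repr.arbitrary k y
  rw [conv_repr _ _ (Repr.tmul rx ry)]
  simp only [Repr.tmul, Finset.sum_product, LinearMap.comp_apply, LinearEquiv.coe_coe,
    TensorProduct.comm_tmul, TensorProduct.map_tmul, LinearMap.mul'_apply]
  rw [convUnit_apply, _root_.counit_tmul]
  rw [Finset.sum_comm]
  have inner : ∀ j ∈ ry.index,
      ∑ i ∈ rx.index, S (ry.left j) * S (rx.left i) * (rx.right i * ry.right j)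
        = ε x • (S (ry.left j) * ry.right j) := by
    intro j _
    have hx := HopfAlgebra.sum_antipode_mul_eq_smul (R := k) rx
    calc ∑ i ∈ rx.index, S (ry.left j) * S (rx.left i) * (rx.right i * ry.right j)
        = S (ry.left j) * (∑ i ∈ rx.index, S (rx.left i) * rx.right i) * ry.right j := by
          rw [Finset.mul_sum, Finset.sum_mul]; simp only [mul_assoc]
      _ = ε x • (S (ry.left j) * ry.right j) := by
          rw [hx, mul_smul_comm, smul_mul_assoc, mul_one]
  rw [Finset.sum_congr rfl inner, ← Finset.smul_sum,
    HopfAlgebra.sum_antipode_mul_eq_smul (R := k) ry, smul_smul, Algebra.smul_def]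

lemma antipode_mul (x y : A) : S (x * y) = S y * S x := by
  have h := conv_eq_of _ _ _ (conv_antimul_mul' (k := k) (A := A)) conv_mul'_antipode_mul'
  have := congrArg (fun f => f (x ⊗ₜ[k] y)) h
  simpa using this.symm

end Hopf
section AntiCoalg

variable {k A}

local notation "S" => HopfAlgebra.antipode (R := k) (A := A)
local notation "ε" => Coalgebra.counit (R := k)
local notation "Δ" => (Coalgebra.comul (R := k) (A := A))
local notation "μ" => LinearMap.mul' k A

/-- `a ↦ Σ S(a₂) ⊗ S(a₁)`. -/
def hTau : A →ₗ[k] A ⊗[k] A :=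
  (TensorProduct.comm k A A).toLinearMap ∘ₗ TensorProduct.map S S ∘ₗ Δ

lemma hTau_repr {ι : Type*} {a : A} (r : Coalgebra.Repr k a ι) :
    hTau (k := k) a = ∑ i ∈ r.index, S (r.right i) ⊗ₜ[k] S (r.left i) := by
  simp only [hTau, LinearMap.comp_apply, ← r.eq, map_sum, TensorProduct.map_tmul,
    LinearEquiv.coe_coe, TensorProduct.comm_tmul]

lemma comul_one' : Δ (1 : A) = 1 := map_one (Bialgebra.comulAlgHom k A)

lemma conv_comul_comulS : conv k Δ (Δ ∘ₗ S) = convUnit k := by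
  ext a
  set r := Coalgebra.Repr.arbitrary k a
  rw [conv_repr _ _ r]
  have : ∀ i ∈ r.index, Δ (r.left i) * (Δ ∘ₗ S) (r.right i)
      = Δ (r.left i * S (r.right i)) := by
    intro i _
    simp only [LinearMap.comp_apply, ← Bialgebra.comul_mul]
  rw [Finset.sum_congr rfl this, ← map_sum, HopfAlgebra.sum_mul_antipode_eq_smul r,
    map_smul, comul_one', convUnit_apply]

/-- `Φ(u ⊗ (v ⊗ w)) = Σ (S v * w₁) ⊗ (S u * w₂)`. -/
def PhiMap : A ⊗[k] (A ⊗[k] A) →ₗ[k] A ⊗[k] A :=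
  TensorProduct.map μ μ
    ∘ₗ (TensorProduct.tensorTensorTensorComm k A A A A).toLinearMap
    ∘ₗ TensorProduct.map (TensorProduct.comm k A A).toLinearMap LinearMap.id
    ∘ₗ (TensorProduct.assoc k A A (A ⊗[k] A)).symm.toLinearMap
    ∘ₗ TensorProduct.map S (TensorProduct.map S Δ)

lemma PhiMap_tmul {ι : Type*} (u v w : A) (rw : Coalgebra.Repr k w ι) :
    PhiMap (k := k) (u ⊗ₜ[k] (v ⊗ₜ[k] w))
      = ∑ m ∈ rw.index, (S v * rw.left m) ⊗ₜ[k] (S u * rw.right m) := by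
  simp only [PhiMap, LinearMap.comp_apply, TensorProduct.map_tmul, LinearMap.id_coe, id_eq,
    ← rw.eq]
  simp only [TensorProduct.tmul_sum, map_sum, TensorProduct.assoc_symm_tmul,
    TensorProduct.map_tmul, LinearEquiv.coe_coe, TensorProduct.comm_tmul,
    TensorProduct.tensorTensorTensorComm_tmul, LinearMap.mul'_apply, LinearMap.id_coe, id_eq]

/-- key 3-fold identity: `Σ (S c₁ * c₂) ⊗ (d * c₃) = 1 ⊗ (d * c)`. -/
lemma P1 {ι : Type*} {c : A} (d : A) (rc : Coalgebra.Repr k c ι)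
    (rcr : (l : rc.ι) → Coalgebra.Repr k (rc.right l) (A × A)) :
    ∑ l ∈ rc.index, ∑ m ∈ (rcr l).index,
        (S (rc.left l) * (rcr l).left m) ⊗ₜ[k] (d * (rcr l).right m)
      = 1 ⊗ₜ[k] (d * c) := by
  set rcl : (l : rc.ι) → Coalgebra.Repr k (rc.left l) (A × A) := fun l => Coalgebra.Repr.arbitrary k _
  have E1 := Coalgebra.sum_tmul_tmul_eq rc rcl rcr
  set Ψ : A ⊗[k] (A ⊗[k] A) →ₗ[k] A ⊗[k] A :=
    TensorProduct.map (μ ∘ₗ TensorProduct.map S LinearMap.id) (LinearMap.mulLeft k d)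
      ∘ₗ (TensorProduct.assoc k A A A).symm.toLinearMap with hΨ
  have Ψtmul : ∀ u v w : A, Ψ (u ⊗ₜ[k] (v ⊗ₜ[k] w)) = (S u * v) ⊗ₜ[k] (d * w) := by
    intro u v w
    simp [hΨ, LinearMap.mulLeft_apply]
  have := congrArg Ψ E1
  simp only [map_sum, Ψtmul] at this
  rw [← this]
  have inner : ∀ l ∈ rc.index,
      ∑ j ∈ (rcl l).index, (S ((rcl l).left j) * (rcl l).right j) ⊗ₜ[k] (d * rc.right l)
        = ε (rc.left l) • (1 ⊗ₜ[k] (d * rc.right l)) := by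
    intro l _
    rw [← TensorProduct.sum_tmul, HopfAlgebra.sum_antipode_mul_eq_smul (R := k) (rcl l),
      TensorProduct.smul_tmul']
  rw [Finset.sum_congr rfl inner]
  have : ∑ l ∈ rc.index, ε (rc.left l) • ((1 : A) ⊗ₜ[k] (d * rc.right l))
      = (1 : A) ⊗ₜ[k] (d * ∑ l ∈ rc.index, ε (rc.left l) • rc.right l) := by
    rw [Finset.mul_sum, TensorProduct.tmul_sum]
    refine Finset.sum_congr rfl fun l _ => ?_
    rw [mul_smul_comm, TensorProduct.tmul_smul]
  rw [this, sum_counit_smul rc]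

lemma conv_hTau_comul : conv k (hTau (k := k) (A := A)) Δ = convUnit k := by
  ext a
  set r := Coalgebra.Repr.arbitrary k a with hr
  set r₁ : (i : r.ι) → Coalgebra.Repr k (r.left i) (A × A) := fun i => Coalgebra.Repr.arbitrary k _
  set r₂ : (i : r.ι) → Coalgebra.Repr k (r.right i) (A × A) := fun i => Coalgebra.Repr.arbitrary k _
  have E0 := Coalgebra.sum_tmul_tmul_eq r r₁ r₂
  have := congrArg (PhiMap (k := k) (A := A)) E0
  simp only [map_sum] at this
  -- LHS of `this` equals `conv k (hTau (k := k) (A := A)) Δ a`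
  have lhs_eq : ∑ i ∈ r.index, ∑ j ∈ (r₁ i).index,
      PhiMap (k := k) ((r₁ i).left j ⊗ₜ[k] ((r₁ i).right j ⊗ₜ[k] r.right i))
      = conv k (hTau (k := k) (A := A)) Δ a := by
    rw [conv_repr _ _ r]
    refine Finset.sum_congr rfl fun i _ => ?_
    rw [hTau_repr (r₁ i)]
    conv_rhs => rw [← (r₂ i).eq]
    rw [Finset.sum_mul_sum]
    refine Finset.sum_congr rfl fun j _ => ?_
    rw [PhiMap_tmul _ _ _ (r₂ i)]
    refine Finset.sum_congr rfl fun l _ => ?_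
    rw [Algebra.TensorProduct.tmul_mul_tmul]
  -- RHS of `this` collapses
  have rhs_eq : ∑ i ∈ r.index, ∑ l ∈ (r₂ i).index,
      PhiMap (k := k) (r.left i ⊗ₜ[k] ((r₂ i).left l ⊗ₜ[k] (r₂ i).right l))
      = convUnit k (B := A ⊗[k] A) a := by
    have : ∀ i ∈ r.index, ∑ l ∈ (r₂ i).index,
        PhiMap (k := k) (r.left i ⊗ₜ[k] ((r₂ i).left l ⊗ₜ[k] (r₂ i).right l))
        = 1 ⊗ₜ[k] (S (r.left i) * r.right i) := by
      intro i _
      have := P1 (S (r.left i)) (r₂ i) (fun l => Coalgebra.Repr.arbitrary k _)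
      rw [← this]
      refine Finset.sum_congr rfl fun l _ => ?_
      rw [PhiMap_tmul _ _ _ (Coalgebra.Repr.arbitrary k ((r₂ i).right l))]
    rw [Finset.sum_congr rfl this, ← TensorProduct.tmul_sum,
      HopfAlgebra.sum_antipode_mul_eq_smul (R := k) r, convUnit_apply,
      TensorProduct.tmul_smul, Algebra.TensorProduct.one_def]
  rw [lhs_eq, rhs_eq] at this
  exact this

lemma comul_antipode : hTau (k := k) (A := A) = Δ ∘ₗ S :=
  conv_eq_of _ _ _ conv_hTau_comul conv_comul_comulS

lemma comul_antipode_repr {ι : Type*} {a : A} (r : Coalgebra.Repr k a ι) :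
    Δ (S a) = ∑ i ∈ r.index, S (r.right i) ⊗ₜ[k] S (r.left i) := by
  rw [← hTau_repr r, comul_antipode]; rfl

/-- Representation of `comul (S a)`. -/
def Coalgebra.Repr.antipode {ι : Type*} {a : A} (r : Coalgebra.Repr k a ι) : Coalgebra.Repr k (S a) ι where
  index := r.index
  left := fun i => S (r.right i)
  right := fun i => S (r.left i)
  eq := (comul_antipode_repr r).symm

end AntiCoalg
section Main

variable {k A}

local notation "S" => HopfAlgebra.antipode (R := k) (A := A)
local notation "ε" => Coalgebra.counit (R := k)
local notation "Δ" => (Coalgebra.comul (R := k) (A := A))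
local notation "μ" => LinearMap.mul' k A

variable (π : A →ₐ[k] k)

lemma pi_SS (a : A) : π (S (S a)) = π a := by
  have h1 : conv k π.toLinearMap (π.toLinearMap ∘ₗ S) = convUnit k := by
    ext a
    set r := Coalgebra.Repr.arbitrary k a
    rw [conv_repr _ _ r]
    have : ∀ i ∈ r.index, π.toLinearMap (r.left i) * (π.toLinearMap ∘ₗ S) (r.right i)
        = π.toLinearMap (r.left i * S (r.right i)) := fun i _ => by simp [map_mul]
    rw [Finset.sum_congr rfl this, ← map_sum, HopfAlgebra.sum_mul_antipode_eq_smul r]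
    simp [convUnit]
  have h2 : conv k (π.toLinearMap ∘ₗ S) (π.toLinearMap ∘ₗ S ∘ₗ S) = convUnit k := by
    ext a
    set r := Coalgebra.Repr.arbitrary k a
    rw [conv_repr _ _ r]
    have : ∀ i ∈ r.index,
        (π.toLinearMap ∘ₗ S) (r.left i) * (π.toLinearMap ∘ₗ S ∘ₗ S) (r.right i)
        = π.toLinearMap (S (r.left i * S (r.right i))) := by
      intro i _
      simp only [LinearMap.comp_apply, AlgHom.toLinearMap_apply]
      rw [antipode_mul, map_mul, mul_comm]
    rw [Finset.sum_congr rfl this, ← map_sum, ← map_sum,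
      HopfAlgebra.sum_mul_antipode_eq_smul r, map_smul, antipode_one, map_smul]
    simp [convUnit]
  have := conv_eq_of _ _ _ h1 h2
  exact (congrArg (fun f : A →ₗ[k] k => f a) this).symm

lemma windL_repr {ι : Type*} (φ : A →ₗ[k] k) {a : A} (r : Coalgebra.Repr k a ι) :
    windL k A φ a = ∑ i ∈ r.index, φ (r.left i) • r.right i := by
  simp only [windL, LinearMap.comp_apply, ← r.eq, map_sum, TensorProduct.map_tmul,
    LinearEquiv.coe_coe, TensorProduct.lid_tmul, LinearMap.id_coe, id_eq]

/-- `gmap π = Ξℓ[π] ∘ S²`. -/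
def gmap : A →ₗ[k] A := windL k A π.toLinearMap ∘ₗ S ∘ₗ S

lemma gmap_repr {ι : Type*} {x : A} (r : Coalgebra.Repr k x ι) :
    gmap π x = ∑ i ∈ r.index, π (r.left i) • S (S (r.right i)) := by
  have : gmap π x = windL k A π.toLinearMap (S (S x)) := rfl
  rw [this, windL_repr _ ((Coalgebra.Repr.antipode r).antipode)]
  simp only [Coalgebra.Repr.antipode, AlgHom.toLinearMap_apply, pi_SS]

lemma gmap_one : gmap π 1 = 1 := by
  rw [gmap_repr π (Repr.one (A := A))]
  simp [Repr.one, antipode_one]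

lemma gmap_mul (x y : A) : gmap π (x * y) = gmap π x * gmap π y := by
  set rx := Coalgebra.Repr.arbitrary k x
  set ry := Coalgebra.Repr.arbitrary k y
  rw [gmap_repr π (Repr.mul rx ry), gmap_repr π rx, gmap_repr π ry,
    Finset.sum_mul_sum]
  simp only [Repr.mul, Finset.sum_product]
  refine Finset.sum_congr rfl fun i _ => Finset.sum_congr rfl fun j _ => ?_
  rw [map_mul, antipode_mul, antipode_mul, smul_mul_smul_comm]


lemma adAct_tmul {ι : Type*} {a : A} (x y : A) (r : Coalgebra.Repr k a ι) :
    adAct k A a (x ⊗ₜ[k] y) = ∑ i ∈ r.index, (r.left i * x) ⊗ₜ[k] (y * S (r.right i)) := by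
  simp only [adAct, LinearMap.comp_apply, ← r.eq, map_sum, TensorProduct.map_tmul,
    LinearMap.sum_apply, TensorProduct.homTensorHomMap_apply, LinearMap.mul_apply',
    LinearMap.flip_apply]

lemma adAct_one : adAct k A 1 = LinearMap.id := by
  apply TensorProduct.ext'
  intro x y
  rw [adAct_tmul x y (Repr.one (A := A))]
  simp [Repr.one, antipode_one]

/-- `F(x ⊗ y) = y * gmap π x`. -/
def Fmap : A ⊗[k] A →ₗ[k] A :=
  LinearMap.mul' k A ∘ₗ TensorProduct.map LinearMap.id (gmap π)
    ∘ₗ (TensorProduct.comm k A A).toLinearMap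

lemma Fmap_tmul (x y : A) : Fmap π (x ⊗ₜ[k] y) = y * gmap π x := by
  simp [Fmap]

lemma KB' {ι : Type*} (a : A) (r : Coalgebra.Repr k a ι) :
    ∑ i ∈ r.index, S (r.right i) * gmap π (r.left i) = π a • 1 := by
  set r₁ : (i : r.ι) → Coalgebra.Repr k (r.left i) (A × A) := fun i => Coalgebra.Repr.arbitrary k _
  set r₂ : (i : r.ι) → Coalgebra.Repr k (r.right i) (A × A) := fun i => Coalgebra.Repr.arbitrary k _
  have E0 := Coalgebra.sum_tmul_tmul_eq r r₁ r₂
  set Ψ : A ⊗[k] (A ⊗[k] A) →ₗ[k] A :=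
    (TensorProduct.lid k A).toLinearMap ∘ₗ
      TensorProduct.map π.toLinearMap
        (S ∘ₗ LinearMap.mul' k A ∘ₗ TensorProduct.map S LinearMap.id) with hΨ
  have Ψtmul : ∀ u v w : A, Ψ (u ⊗ₜ[k] (v ⊗ₜ[k] w)) = π u • S (S v * w) := by
    intro u v w; simp [hΨ]
  have key := congrArg Ψ E0
  simp only [map_sum, Ψtmul] at key
  have lhs_eq : ∑ i ∈ r.index, ∑ j ∈ (r₁ i).index,
      π ((r₁ i).left j) • S (S ((r₁ i).right j) * r.right i)
      = ∑ i ∈ r.index, S (r.right i) * gmap π (r.left i) := by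
    refine Finset.sum_congr rfl fun i _ => ?_
    rw [gmap_repr π (r₁ i), Finset.mul_sum]
    refine Finset.sum_congr rfl fun j _ => ?_
    rw [antipode_mul, mul_smul_comm]
  have rhs_eq : ∑ i ∈ r.index, ∑ l ∈ (r₂ i).index,
      π (r.left i) • S (S ((r₂ i).left l) * (r₂ i).right l)
      = π a • (1 : A) := by
    have inner : ∀ i ∈ r.index, ∑ l ∈ (r₂ i).index,
        π (r.left i) • S (S ((r₂ i).left l) * (r₂ i).right l)
        = (π (r.left i) * ε (r.right i)) • (1 : A) := by
      intro i _
      rw [← Finset.smul_sum, ← map_sum,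
        HopfAlgebra.sum_antipode_mul_eq_smul (R := k) (r₂ i), map_smul, antipode_one,
        smul_smul]
    rw [Finset.sum_congr rfl inner]
    have : ∀ i ∈ r.index, (π (r.left i) * ε (r.right i)) • (1 : A)
        = π (ε (r.right i) • r.left i) • (1 : A) := by
      intro i _; rw [map_smul, smul_eq_mul, mul_comm]
    rw [Finset.sum_congr rfl this, ← Finset.sum_smul, ← map_sum, sum_smul_counit r]
  rw [lhs_eq, rhs_eq] at key
  exact key

lemma KB (a : A) (w : A ⊗[k] A) :
    Fmap π (adAct k A a w) = π a • Fmap π w := by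
  induction w using TensorProduct.induction_on with
  | zero => simp
  | add u v hu hv => rw [map_add, map_add, hu, hv, map_add, smul_add]
  | tmul x y =>
    set r := Coalgebra.Repr.arbitrary k a
    rw [adAct_tmul x y r, map_sum]
    have : ∀ i ∈ r.index,
        Fmap π ((r.left i * x) ⊗ₜ[k] (y * S (r.right i)))
        = y * (S (r.right i) * gmap π (r.left i)) * gmap π x := by
      intro i _
      rw [Fmap_tmul, gmap_mul]
      simp only [mul_assoc]
    rw [Finset.sum_congr rfl this, ← Finset.sum_mul, ← Finset.mul_sum, KB' π a r,
      Fmap_tmul]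
    rw [mul_smul_comm, smul_mul_assoc, mul_one]

lemma KC1 {ι : Type*} (x y : A) (r : Coalgebra.Repr k x ι) :
    ∑ i ∈ r.index, adAct k A (r.left i) ((1 : A) ⊗ₜ[k] (y * S (S (r.right i))))
      = x ⊗ₜ[k] y := by
  set r₁ : (i : r.ι) → Coalgebra.Repr k (r.left i) (A × A) := fun i => Coalgebra.Repr.arbitrary k _
  set r₂ : (i : r.ι) → Coalgebra.Repr k (r.right i) (A × A) := fun i => Coalgebra.Repr.arbitrary k _
  have E0 := Coalgebra.sum_tmul_tmul_eq r r₁ r₂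
  set Ψ : A ⊗[k] (A ⊗[k] A) →ₗ[k] A ⊗[k] A :=
    TensorProduct.map LinearMap.id
      (LinearMap.mulLeft k y ∘ₗ S ∘ₗ LinearMap.mul' k A
        ∘ₗ TensorProduct.map LinearMap.id S) with hΨ
  have Ψtmul : ∀ u v w : A, Ψ (u ⊗ₜ[k] (v ⊗ₜ[k] w)) = u ⊗ₜ[k] (y * S (v * S w)) := by
    intro u v w; simp [hΨ]
  have key := congrArg Ψ E0
  simp only [map_sum, Ψtmul] at key
  have lhs_eq : ∑ i ∈ r.index, ∑ j ∈ (r₁ i).index,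
      (r₁ i).left j ⊗ₜ[k] (y * S ((r₁ i).right j * S (r.right i)))
      = ∑ i ∈ r.index, adAct k A (r.left i) ((1 : A) ⊗ₜ[k] (y * S (S (r.right i)))) := by
    refine Finset.sum_congr rfl fun i _ => ?_
    rw [adAct_tmul _ _ (r₁ i)]
    refine Finset.sum_congr rfl fun j _ => ?_
    rw [mul_one, antipode_mul, ← mul_assoc]
  have rhs_eq : ∑ i ∈ r.index, ∑ l ∈ (r₂ i).index,
      r.left i ⊗ₜ[k] (y * S ((r₂ i).left l * S ((r₂ i).right l)))
      = x ⊗ₜ[k] y := by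
    have inner : ∀ i ∈ r.index, ∑ l ∈ (r₂ i).index,
        r.left i ⊗ₜ[k] (y * S ((r₂ i).left l * S ((r₂ i).right l)))
        = ε (r.right i) • (r.left i ⊗ₜ[k] y) := by
      intro i _
      rw [← TensorProduct.tmul_sum, ← Finset.mul_sum, ← map_sum,
        HopfAlgebra.sum_mul_antipode_eq_smul (R := k) (r₂ i), map_smul, antipode_one,
        mul_smul_comm, mul_one, TensorProduct.tmul_smul]
    rw [Finset.sum_congr rfl inner]
    have : ∀ i ∈ r.index, ε (r.right i) • (r.left i ⊗ₜ[k] y)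
        = (ε (r.right i) • r.left i) ⊗ₜ[k] y := fun i _ => by
      rw [TensorProduct.smul_tmul']
    rw [Finset.sum_congr rfl this, ← TensorProduct.sum_tmul, sum_smul_counit r]
  rw [lhs_eq, rhs_eq] at key
  exact key


lemma mem_Jsub (a : A) (w : A ⊗[k] A) :
    adAct k A a w - π a • w ∈ Jsub k A π := by
  refine Submodule.subset_span ⟨a - π a • 1, ?_, w, ?_⟩
  · rw [map_sub, map_smul, map_one, smul_eq_mul, mul_one, sub_self]
  · rw [map_sub, map_smul, LinearMap.sub_apply, LinearMap.smul_apply, adAct_one,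
      LinearMap.id_apply]

lemma KC (x y : A) :
    x ⊗ₜ[k] y - (1 : A) ⊗ₜ[k] (y * gmap π x) ∈ Jsub k A π := by
  set r := Coalgebra.Repr.arbitrary k x
  have h2 : (1 : A) ⊗ₜ[k] (y * gmap π x)
      = ∑ i ∈ r.index, π (r.left i) • ((1 : A) ⊗ₜ[k] (y * S (S (r.right i)))) := by
    rw [gmap_repr π r, Finset.mul_sum, TensorProduct.tmul_sum]
    refine Finset.sum_congr rfl fun i _ => ?_
    rw [mul_smul_comm, TensorProduct.tmul_smul]
  rw [← KC1 x y r, h2, ← Finset.sum_sub_distrib]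
  exact Submodule.sum_mem _ fun i _ => mem_Jsub π _ _

end Main
theorem quotient_by_adjoint_action_of_kernel (π : A →ₐ[k] k)
    (hS : Function.Bijective (HopfAlgebra.antipode (R := k) (A := A))) :
    ∃ e : ((A ⊗[k] A) ⧸ Jsub k A π) ≃ₗ[k] A,
      ∀ (b b' : A) (w : A ⊗[k] A),
        e (Submodule.Quotient.mk (bimodAct k A b b' w))
          = b * e (Submodule.Quotient.mk w)
              * windL k A π.toLinearMap
                  (HopfAlgebra.antipode (R := k) (HopfAlgebra.antipode (R := k) b')) := by
  have hker : Jsub k A π ≤ LinearMap.ker (Fmap π) := by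
    rw [Jsub, Submodule.span_le]
    rintro z ⟨a, ha, w, rfl⟩
    simp only [SetLike.mem_coe, LinearMap.mem_ker, KB π a w, ha, zero_smul]
  set F₁ := Submodule.liftQ (Jsub k A π) (Fmap π) hker with hF₁
  set G₁ : A →ₗ[k] (A ⊗[k] A) ⧸ Jsub k A π :=
    (Jsub k A π).mkQ ∘ₗ TensorProduct.mk k A A 1 with hG₁
  have hFG : F₁ ∘ₗ G₁ = LinearMap.id := by
    ext y
    simp only [hF₁, hG₁, LinearMap.comp_apply, TensorProduct.mk_apply,
      Submodule.mkQ_apply, Submodule.liftQ_apply, LinearMap.id_apply, Fmap_tmul,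
      gmap_one, mul_one]
  have hGF : G₁ ∘ₗ F₁ = LinearMap.id := by
    apply Submodule.linearMap_qext
    apply TensorProduct.ext'
    intro x y
    simp only [LinearMap.comp_apply, Submodule.mkQ_apply, Submodule.liftQ_apply,
      LinearMap.id_apply, hF₁, hG₁, TensorProduct.mk_apply, Fmap_tmul]
    rw [Submodule.Quotient.eq, ← neg_sub]
    exact Submodule.neg_mem _ (KC π x y)
  refine ⟨LinearEquiv.ofLinear F₁ G₁ hFG hGF, ?_⟩
  intro b b' w
  have hb : ∀ u : A ⊗[k] A, Fmap π (bimodAct k A b b' u) = b * Fmap π u * gmap π b' := by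
    intro u
    induction u using TensorProduct.induction_on with
    | zero => simp
    | add u v hu hv =>
      rw [map_add, map_add, hu, hv, map_add, mul_add, add_mul]
    | tmul x y =>
      have : bimodAct k A b b' (x ⊗ₜ[k] y) = (x * b') ⊗ₜ[k] (b * y) := by
        simp [bimodAct]
      rw [this, Fmap_tmul, Fmap_tmul, gmap_mul]
      simp only [mul_assoc]
  simp only [LinearEquiv.ofLinear_apply, hF₁, Submodule.liftQ_apply]
  rw [hb w]
  rfl

end
end

section
/- Let A be a Hopf algebra over a field k. If M is an injective left (A ⊗_k A)-module, then M, regarded as a left A-module by restriction of scalars along the coproduct Δ : A → A ⊗ A, is an injective A-module. -/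
/-!
STATEMENT 10: Let `A` be a Hopf algebra over a field `k`.  If `M` is an injective
left `(A ⊗ A)`-module, then `M`, regarded as a left `A`-module by restriction of
scalars along the coproduct `Δ : A → A ⊗ A`, is an injective `A`-module.
-/

open TensorProduct CategoryTheory


open TensorProduct Coalgebra HopfAlgebra

noncomputable section

namespace HopfAux

variable (k A : Type) [Field k] [Ring A] [HopfAlgebra k A]

/-- `x ⊗ y ↦ (x ⊗ 1) * Δ y`. -/
def gam : (A ⊗[k] A) →ₗ[k] (A ⊗[k] A) :=
  (LinearMap.mul' k (A ⊗[k] A)).comp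
    (TensorProduct.map (Algebra.TensorProduct.includeLeft : A →ₐ[k] A ⊗[k] A).toLinearMap
      (Bialgebra.comulAlgHom k A).toLinearMap)

/-- `x ⊗ y ↦ (x ⊗ 1) * ((S ⊗ 1) (Δ y))`. -/
def del : (A ⊗[k] A) →ₗ[k] (A ⊗[k] A) :=
  (LinearMap.mul' k (A ⊗[k] A)).comp
    (TensorProduct.map (Algebra.TensorProduct.includeLeft : A →ₐ[k] A ⊗[k] A).toLinearMap
      ((antipode (R := k) (A := A)).rTensor A ∘ₗ comul))

/-- `x ⊗ (y ⊗ z) ↦ S(x)y ⊗ z`. -/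
def psi1 : A ⊗[k] (A ⊗[k] A) →ₗ[k] A ⊗[k] A :=
  (LinearMap.mul' k A).rTensor A ∘ₗ (TensorProduct.assoc k A A A).symm.toLinearMap ∘ₗ
    (antipode (R := k) (A := A)).rTensor (A ⊗[k] A)

/-- `x ⊗ (y ⊗ z) ↦ xS(y) ⊗ z`. -/
def psi2 : A ⊗[k] (A ⊗[k] A) →ₗ[k] A ⊗[k] A :=
  (LinearMap.mul' k A).rTensor A ∘ₗ (TensorProduct.assoc k A A A).symm.toLinearMap ∘ₗ
    LinearMap.lTensor A ((antipode (R := k) (A := A)).rTensor A)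

variable {k A}

@[simp] lemma gam_tmul (x y : A) :
    gam k A (x ⊗ₜ y) = (x ⊗ₜ (1 : A)) * comul y := by
  simp [gam]

@[simp] lemma del_tmul (x y : A) :
    del k A (x ⊗ₜ y) = (x ⊗ₜ (1 : A)) * ((antipode (R := k) (A := A)).rTensor A (comul y)) := by
  simp [del]

@[simp] lemma psi1_tmul (x y z : A) :
    psi1 k A (x ⊗ₜ (y ⊗ₜ z)) = (antipode (R := k) x * y) ⊗ₜ z := by
  simp [psi1]

@[simp] lemma psi2_tmul (x y z : A) :
    psi2 k A (x ⊗ₜ (y ⊗ₜ z)) = (x * antipode (R := k) y) ⊗ₜ z := by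
  simp [psi2]

lemma sum_algebraMap_counit_tmul (y : A) (r : Coalgebra.Repr k y (A × A)) :
    ∑ i ∈ r.index, (algebraMap k A (counit (R := k) (r.left i))) ⊗ₜ[k] r.right i
      = (1 : A) ⊗ₜ[k] y := by
  have h := Coalgebra.sum_counit_tmul_eq (R := k) r
  apply_fun TensorProduct.map (Algebra.linearMap k A) (LinearMap.id) at h
  simp only [map_sum, TensorProduct.map_tmul, Algebra.linearMap_apply, LinearMap.id_coe,
    id_eq, map_one] at h
  exact h

lemma gam_antipode (y : A) :
    gam k A ((antipode (R := k) (A := A)).rTensor A (comul y)) = (1 : A) ⊗ₜ y := by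
  obtain r := ℛ k y
  have coas := Coalgebra.sum_tmul_tmul_eq (R := k) r (fun i => ℛ k (r.left i))
    (fun i => ℛ k (r.right i))
  apply_fun psi1 k A at coas
  rw [map_sum, map_sum] at coas
  have hL : ∑ i ∈ r.index, psi1 k A (∑ j ∈ (ℛ k (r.left i)).index,
      (ℛ k (r.left i)).left j ⊗ₜ[k] ((ℛ k (r.left i)).right j ⊗ₜ[k] r.right i))
      = (1 : A) ⊗ₜ[k] y := by
    calc ∑ i ∈ r.index, psi1 k A (∑ j ∈ (ℛ k (r.left i)).index,
        (ℛ k (r.left i)).left j ⊗ₜ[k] ((ℛ k (r.left i)).right j ⊗ₜ[k] r.right i))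
        = ∑ i ∈ r.index, (algebraMap k A (counit (R := k) (r.left i))) ⊗ₜ[k] r.right i := by
          refine Finset.sum_congr rfl fun i _ => ?_
          rw [map_sum]
          simp only [psi1_tmul]
          rw [← TensorProduct.sum_tmul, HopfAlgebra.sum_antipode_mul_eq_algebraMap_counit]
      _ = (1 : A) ⊗ₜ[k] y := sum_algebraMap_counit_tmul y r
  rw [hL] at coas
  have step : ∀ i ∈ r.index,
      gam k A ((antipode (R := k) (A := A)).rTensor A (r.left i ⊗ₜ[k] r.right i))
      = psi1 k A (∑ j ∈ (ℛ k (r.right i)).index,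
          r.left i ⊗ₜ[k] ((ℛ k (r.right i)).left j ⊗ₜ[k] (ℛ k (r.right i)).right j)) := by
    intro i _
    rw [LinearMap.rTensor_tmul, gam_tmul, ← (ℛ k (r.right i)).eq, Finset.mul_sum, map_sum]
    refine Finset.sum_congr rfl fun j _ => ?_
    simp [Algebra.TensorProduct.tmul_mul_tmul]
  calc gam k A ((antipode (R := k) (A := A)).rTensor A (comul y))
      = ∑ i ∈ r.index, gam k A ((antipode (R := k) (A := A)).rTensor A
          (r.left i ⊗ₜ[k] r.right i)) := by
        rw [← r.eq]; simp only [map_sum]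
    _ = ∑ i ∈ r.index, psi1 k A (∑ j ∈ (ℛ k (r.right i)).index,
          r.left i ⊗ₜ[k] ((ℛ k (r.right i)).left j ⊗ₜ[k] (ℛ k (r.right i)).right j)) :=
        Finset.sum_congr rfl step
    _ = (1 : A) ⊗ₜ[k] y := coas.symm

lemma del_comul (y : A) : del k A (comul (R := k) y) = (1 : A) ⊗ₜ y := by
  obtain r := ℛ k y
  have coas := Coalgebra.sum_tmul_tmul_eq (R := k) r (fun i => ℛ k (r.left i))
    (fun i => ℛ k (r.right i))
  apply_fun psi2 k A at coas
  rw [map_sum, map_sum] at coas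
  have hL : ∑ i ∈ r.index, psi2 k A (∑ j ∈ (ℛ k (r.left i)).index,
      (ℛ k (r.left i)).left j ⊗ₜ[k] ((ℛ k (r.left i)).right j ⊗ₜ[k] r.right i))
      = (1 : A) ⊗ₜ[k] y := by
    calc ∑ i ∈ r.index, psi2 k A (∑ j ∈ (ℛ k (r.left i)).index,
        (ℛ k (r.left i)).left j ⊗ₜ[k] ((ℛ k (r.left i)).right j ⊗ₜ[k] r.right i))
        = ∑ i ∈ r.index, (algebraMap k A (counit (R := k) (r.left i))) ⊗ₜ[k] r.right i := by
          refine Finset.sum_congr rfl fun i _ => ?_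
          rw [map_sum]
          simp only [psi2_tmul]
          rw [← TensorProduct.sum_tmul, HopfAlgebra.sum_mul_antipode_eq_algebraMap_counit]
      _ = (1 : A) ⊗ₜ[k] y := sum_algebraMap_counit_tmul y r
  rw [hL] at coas
  have step : ∀ i ∈ r.index, del k A (r.left i ⊗ₜ[k] r.right i)
      = psi2 k A (∑ j ∈ (ℛ k (r.right i)).index,
          r.left i ⊗ₜ[k] ((ℛ k (r.right i)).left j ⊗ₜ[k] (ℛ k (r.right i)).right j)) := by
    intro i _
    rw [del_tmul, ← (ℛ k (r.right i)).eq, map_sum, Finset.mul_sum, map_sum]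
    refine Finset.sum_congr rfl fun j _ => ?_
    simp [Algebra.TensorProduct.tmul_mul_tmul]
  calc del k A (comul (R := k) y)
      = ∑ i ∈ r.index, del k A (r.left i ⊗ₜ[k] r.right i) := by
        rw [← r.eq]; simp only [map_sum]
    _ = ∑ i ∈ r.index, psi2 k A (∑ j ∈ (ℛ k (r.right i)).index,
          r.left i ⊗ₜ[k] ((ℛ k (r.right i)).left j ⊗ₜ[k] (ℛ k (r.right i)).right j)) :=
        Finset.sum_congr rfl step
    _ = (1 : A) ⊗ₜ[k] y := coas.symm

lemma gam_one_mul (x : A) (t : A ⊗[k] A) :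
    gam k A ((x ⊗ₜ (1 : A)) * t) = (x ⊗ₜ (1 : A)) * gam k A t := by
  induction t using TensorProduct.induction_on with
  | zero => simp
  | tmul u v =>
      rw [Algebra.TensorProduct.tmul_mul_tmul, one_mul, gam_tmul, gam_tmul, ← mul_assoc,
        Algebra.TensorProduct.tmul_mul_tmul, mul_one]
  | add s t hs ht => simp [mul_add, hs, ht]

lemma del_one_mul (x : A) (t : A ⊗[k] A) :
    del k A ((x ⊗ₜ (1 : A)) * t) = (x ⊗ₜ (1 : A)) * del k A t := by
  induction t using TensorProduct.induction_on with
  | zero => simp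
  | tmul u v =>
      rw [Algebra.TensorProduct.tmul_mul_tmul, one_mul, del_tmul, del_tmul, ← mul_assoc,
        Algebra.TensorProduct.tmul_mul_tmul, mul_one]
  | add s t hs ht => simp [mul_add, hs, ht]

lemma del_gam (t : A ⊗[k] A) : del k A (gam k A t) = t := by
  induction t using TensorProduct.induction_on with
  | zero => simp
  | tmul x y =>
      rw [gam_tmul, del_one_mul, del_comul, Algebra.TensorProduct.tmul_mul_tmul,
        mul_one, one_mul]
  | add s t hs ht => simp [map_add, hs, ht]

lemma gam_del (t : A ⊗[k] A) : gam k A (del k A t) = t := by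
  induction t using TensorProduct.induction_on with
  | zero => simp
  | tmul x y =>
      rw [del_tmul, gam_one_mul, gam_antipode, Algebra.TensorProduct.tmul_mul_tmul,
        mul_one, one_mul]
  | add s t hs ht => simp [map_add, hs, ht]

variable (k A) in
/-- The Galois map `x ⊗ y ↦ (x ⊗ 1) Δ(y)` as a linear equivalence. -/
def gamEquiv : (A ⊗[k] A) ≃ₗ[k] (A ⊗[k] A) :=
  LinearEquiv.ofLinear (gam k A) (del k A) (LinearMap.ext gam_del) (LinearMap.ext del_gam)

@[simp] lemma gamEquiv_apply (t : A ⊗[k] A) : gamEquiv k A t = gam k A t := rfl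

@[simp] lemma gamEquiv_symm_apply (t : A ⊗[k] A) : (gamEquiv k A).symm t = del k A t := rfl

lemma gam_lTensor_mulRight (a : A) (t : A ⊗[k] A) :
    gam k A ((LinearMap.mulRight k a).lTensor A t)
      = gam k A t * (Bialgebra.comulAlgHom k A a) := by
  induction t using TensorProduct.induction_on with
  | zero => simp
  | tmul x y =>
      simp only [LinearMap.lTensor_tmul, LinearMap.mulRight_apply, gam_tmul]
      rw [show (Bialgebra.comulAlgHom k A a : A ⊗[k] A) = comul a from rfl,
        Bialgebra.comul_mul, mul_assoc]
  | add s t hs ht => simp [map_add, hs, ht, add_mul]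

lemma del_mul_comul (a : A) (s : A ⊗[k] A) :
    del k A (s * (Bialgebra.comulAlgHom k A a))
      = (LinearMap.mulRight k a).lTensor A (del k A s) := by
  apply (gamEquiv k A).injective
  show gam k A _ = gam k A _
  rw [gam_lTensor_mulRight, gam_del, gam_del]

universe w

section Coind

variable (k A : Type) [Field k] [Ring A] [HopfAlgebra k A]
variable (M : Type w) [AddCommGroup M] [Module (A ⊗[k] A) M]
  [Module k M] [IsScalarTower k (A ⊗[k] A) M]

/-- The coinduced module `Hom_k(A ⊗ A, M)`, as a type synonym carrying the
`(A ⊗ A)`-module structure `(t • φ) s = φ (s * t)`. -/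
def Coind : Type w := (A ⊗[k] A) →ₗ[k] M

variable {k A M}

/-- Pack a linear map as an element of `Coind`. -/
def Coind.of (φ : (A ⊗[k] A) →ₗ[k] M) : Coind k A M := φ

/-- Unpack an element of `Coind`. -/
def Coind.toLin (φ : Coind k A M) : (A ⊗[k] A) →ₗ[k] M := φ

lemma Coind.ext {φ ψ : Coind k A M} (h : Coind.toLin φ = Coind.toLin ψ) : φ = ψ := h

instance : AddCommGroup (Coind k A M) :=
  inferInstanceAs (AddCommGroup ((A ⊗[k] A) →ₗ[k] M))

@[simp] lemma Coind.toLin_add (φ ψ : Coind k A M) :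
    Coind.toLin (φ + ψ) = Coind.toLin φ + Coind.toLin ψ := rfl

@[simp] lemma Coind.toLin_zero : Coind.toLin (0 : Coind k A M) = 0 := rfl

@[simp] lemma Coind.toLin_of (φ : (A ⊗[k] A) →ₗ[k] M) : Coind.toLin (Coind.of φ) = φ := rfl

instance : SMul (A ⊗[k] A) (Coind k A M) :=
  ⟨fun t φ => Coind.of ((Coind.toLin φ).comp (LinearMap.mulRight k t))⟩

@[simp] lemma Coind.toLin_smul (t : A ⊗[k] A) (φ : Coind k A M) (s : A ⊗[k] A) :
    Coind.toLin (t • φ) s = Coind.toLin φ (s * t) := rfl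

instance : Module (A ⊗[k] A) (Coind k A M) where
  one_smul φ := Coind.ext (LinearMap.ext fun s => by simp)
  mul_smul t t' φ := Coind.ext (LinearMap.ext fun s => by simp [mul_assoc])
  smul_zero t := Coind.ext (LinearMap.ext fun s => rfl)
  smul_add t φ ψ := Coind.ext (LinearMap.ext fun s => rfl)
  add_smul t t' φ := Coind.ext (LinearMap.ext fun s => by
    simp [mul_add, map_add])
  zero_smul φ := Coind.ext (LinearMap.ext fun s => by simp)

variable (k A M) in
/-- The canonical embedding of `M` into its coinduced module. -/
def iota : M →ₗ[A ⊗[k] A] Coind k A M where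
  toFun m := Coind.of
    { toFun := fun s => s • m
      map_add' := fun s t => add_smul s t m
      map_smul' := fun c s => smul_assoc c s m }
  map_add' m m' := Coind.ext (LinearMap.ext fun s => smul_add s m m')
  map_smul' t m := Coind.ext (LinearMap.ext fun s => (mul_smul s t m).symm)

@[simp] lemma iota_apply (m : M) (s : A ⊗[k] A) : Coind.toLin (iota k A M m) s = s • m := rfl

lemma iota_injective : Function.Injective (iota k A M) := fun m m' h => by
  have := congrArg (fun φ => Coind.toLin φ 1) h
  simpa using this

end Coind

section Key

variable {k A : Type} [Field k] [Ring A] [HopfAlgebra k A]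
variable {M : Type w} [AddCommGroup M] [Module (A ⊗[k] A) M]
  [Module k M] [IsScalarTower k (A ⊗[k] A) M]

theorem key (hM : Module.Injective (A ⊗[k] A) M) :
    letI : Module A M := Module.compHom M (Bialgebra.comulAlgHom k A).toRingHom
    Module.Injective A M := by
  letI : Module A M := Module.compHom M (Bialgebra.comulAlgHom k A).toRingHom
  constructor
  intro X Y _ _ _ _ f hf g
  letI : Module k X := Module.compHom X (algebraMap k A)
  letI : Module k Y := Module.compHom Y (algebraMap k A)
  haveI tY : IsScalarTower k A Y := ⟨fun c a y => by
    rw [Algebra.smul_def, mul_smul]; rfl⟩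
  obtain ⟨π, hπ⟩ := hM.out (iota k A M) iota_injective (LinearMap.id : M →ₗ[A ⊗[k] A] M)
  let fk : X →ₗ[k] Y :=
    { toFun := f
      map_add' := map_add f
      map_smul' := fun c x => f.map_smul (algebraMap k A c) x }
  have hfk : LinearMap.ker fk = ⊥ := LinearMap.ker_eq_bot.mpr hf
  obtain ⟨r, hr⟩ := fk.exists_leftInverse_of_injective hfk
  let gk : X →ₗ[k] M :=
    { toFun := g
      map_add' := map_add g
      map_smul' := fun c x => by
        show g ((algebraMap k A c) • x) = c • g x
        rw [g.map_smul]
        show (Bialgebra.comulAlgHom k A) ((algebraMap k A) c) • g x = c • g x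
        rw [AlgHom.commutes]
        exact algebraMap_smul (A ⊗[k] A) c (g x) }
  let actL : (A ⊗[k] A) → M →ₗ[k] M := fun s =>
    { toFun := fun m => s • m
      map_add' := fun m m' => smul_add s m m'
      map_smul' := fun c m => by
        show s • c • m = c • (s • m)
        rw [← algebraMap_smul (A ⊗[k] A) c m, ← algebraMap_smul (A ⊗[k] A) c (s • m),
          ← mul_smul, ← mul_smul, Algebra.commutes] }
  let sd : A → Y →ₗ[k] Y := fun d =>
    { toFun := fun y => d • y
      map_add' := fun y y' => smul_add d y y'
      map_smul' := fun c y => by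
        show d • (algebraMap k A c) • y = (algebraMap k A c) • (d • y)
        rw [← mul_smul, ← mul_smul, Algebra.commutes] }
  let e : A →ₗ[k] A →ₗ[k] Y →ₗ[k] M := LinearMap.mk₂ k
    (fun c d => (actL (c ⊗ₜ 1)) ∘ₗ gk ∘ₗ r ∘ₗ sd d)
    (fun c c' d => LinearMap.ext fun y => by
      show ((c + c') ⊗ₜ[k] (1:A)) • gk (r (d • y))
          = (c ⊗ₜ[k] (1:A)) • gk (r (d • y)) + (c' ⊗ₜ[k] (1:A)) • gk (r (d • y))
      rw [TensorProduct.add_tmul, add_smul])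
    (fun a c d => LinearMap.ext fun y => by
      show ((a • c) ⊗ₜ[k] (1:A)) • gk (r (d • y)) = a • ((c ⊗ₜ[k] (1:A)) • gk (r (d • y)))
      rw [← TensorProduct.smul_tmul', smul_assoc])
    (fun c d d' => LinearMap.ext fun y => by
      show (c ⊗ₜ[k] (1:A)) • gk (r ((d + d') • y))
          = (c ⊗ₜ[k] (1:A)) • gk (r (d • y)) + (c ⊗ₜ[k] (1:A)) • gk (r (d' • y))
      rw [add_smul, map_add, map_add, smul_add])
    (fun a c d => LinearMap.ext fun y => by
      show (c ⊗ₜ[k] (1:A)) • gk (r ((a • d) • y)) = a • ((c ⊗ₜ[k] (1:A)) • gk (r (d • y)))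
      rw [smul_assoc a d y, map_smul, map_smul]
      exact (actL (c ⊗ₜ[k] (1:A))).map_smul a (gk (r (d • y))))
  let P : (A ⊗[k] A) →ₗ[k] (Y →ₗ[k] M) := TensorProduct.lift e
  have hP1 : ∀ (a : A) (y : Y) (t : A ⊗[k] A),
      P t (a • y) = P ((LinearMap.mulRight k a).lTensor A t) y := by
    intro a y t
    induction t using TensorProduct.induction_on with
    | zero => simp
    | tmul c d =>
        simp only [P, TensorProduct.lift.tmul, LinearMap.lTensor_tmul,
          LinearMap.mulRight_apply]
        show (c ⊗ₜ[k] (1:A)) • gk (r (d • (a • y))) = (c ⊗ₜ[k] (1:A)) • gk (r ((d * a) • y))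
        rw [← mul_smul]
    | add s t hs ht => simp only [map_add, LinearMap.add_apply, hs, ht]
  have hP2 : ∀ (x : X) (t : A ⊗[k] A), P t (f x) = gam k A t • g x := by
    intro x t
    induction t using TensorProduct.induction_on with
    | zero => simp
    | tmul c d =>
        simp only [P, TensorProduct.lift.tmul, gam_tmul]
        show (c ⊗ₜ[k] (1:A)) • gk (r (d • f x)) = ((c ⊗ₜ[k] (1:A)) * comul d) • g x
        have h1 : d • f x = f (d • x) := (f.map_smul d x).symm
        have h2 : r (fk (d • x)) = d • x := by
          have := congrArg (fun (q : X →ₗ[k] X) => q (d • x)) hr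
          simpa using this
        rw [h1]
        show (c ⊗ₜ[k] (1:A)) • gk (r (fk (d • x))) = ((c ⊗ₜ[k] (1:A)) * comul d) • g x
        rw [h2]
        show (c ⊗ₜ[k] (1:A)) • g (d • x) = ((c ⊗ₜ[k] (1:A)) * comul d) • g x
        have h3 : g (d • x) = (Bialgebra.comulAlgHom k A d) • g x := g.map_smul d x
        rw [h3, ← mul_smul]
        rfl
    | add s t hs ht => simp only [map_add, LinearMap.add_apply, hs, ht, add_smul]
  let C : (A ⊗[k] A) →ₗ[k] (Y →ₗ[k] M) := P ∘ₗ (gamEquiv k A).symm.toLinearMap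
  let F : Y →ₗ[k] ((A ⊗[k] A) →ₗ[k] M) := C.flip
  have Fapply : ∀ (y : Y) (s : A ⊗[k] A), F y s = P (del k A s) y := fun y s => rfl
  refine ⟨{ toFun := fun y => π (Coind.of (F y))
            map_add' := fun y y' => by
              show π (Coind.of (F (y + y'))) = π (Coind.of (F y)) + π (Coind.of (F y'))
              rw [map_add F]
              exact map_add π _ _
            map_smul' := fun a y => ?_ }, fun x => ?_⟩
  · show π (Coind.of (F (a • y))) = a • π (Coind.of (F y))
    have : Coind.of (F (a • y))
        = (Bialgebra.comulAlgHom k A a : A ⊗[k] A) • Coind.of (F y) := by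
      apply Coind.ext
      apply LinearMap.ext fun s => ?_
      rw [Coind.toLin_smul, Coind.toLin_of, Coind.toLin_of, Fapply, Fapply,
        del_mul_comul, ← hP1]
    rw [this, map_smul]
    rfl
  · show π (Coind.of (F (f x))) = g x
    have : Coind.of (F (f x)) = iota k A M (g x) := by
      apply Coind.ext
      apply LinearMap.ext fun s => ?_
      rw [Coind.toLin_of, Fapply, hP2, iota_apply, gam_del]
    rw [this, hπ]
    rfl

end Key

end HopfAux

variable (k A : Type) [Field k] [Ring A] [HopfAlgebra k A]

theorem restrict_comul_injective (M : ModuleCat (A ⊗[k] A)) (hM : Injective M) :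
    Injective ((ModuleCat.restrictScalars
      (Bialgebra.comulAlgHom k A).toRingHom).obj M) := by
  letI : Module k M := Module.compHom M (algebraMap k (A ⊗[k] A))
  letI : IsScalarTower k (A ⊗[k] A) M := ⟨fun c s m => by
    rw [Algebra.smul_def, mul_smul]; rfl⟩
  haveI hM' : Injective (ModuleCat.of (A ⊗[k] A) M) := hM
  have hinj : Module.Injective (A ⊗[k] A) M :=
    Module.injective_module_of_injective_object _ _
  have hkey := HopfAux.key (M := M) hinj
  exact @Module.injective_object_of_injective_module A M _ _
    (Module.compHom M (Bialgebra.comulAlgHom k A).toRingHom) hkey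

end
end
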